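/- arXiv:math/0506596 — 4 statements merged into one kernel-verified Lean document; each statement's English description precedes it below -/
import Mathlib

section
/- If w : ℝ^d → ℝ is Borel measurable, satisfies |w(x)| ≤ C_w(1+|x|^{m̃}) for all x (for some constants C_w and m̃ ≥ 0), satisfies w(x) = ∫ w(y) μ_t^x(dy) for all t ≥ 0 and x ∈ ℝ^d, and satisfies ∫ w dμ = 0, then w(x) = 0 for every x ∈ ℝ^d. Consequently, the solution of the integral Poisson equation u(x) = ∫ u dμ_t^x + ∫_0^t (∫ f dμ_s^x) ds is unique in the class of Borel functions of polynomial growth with zero μ-mean. -/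
open MeasureTheory Set

/-- Total variation norm of the difference of two (finite) measures. -/
noncomputable def tvNorm {α : Type*} [MeasurableSpace α] (μ ν : Measure α) : ℝ :=
  (⨆ (E : Set α) (_ : MeasurableSet E), (μ E - ν E)).toReal +
  (⨆ (E : Set α) (_ : MeasurableSet E), (ν E - μ E)).toReal

lemma tv_lemma1 {X : Type*} [MeasurableSpace X]
    (α β : Measure X) [IsProbabilityMeasure α] [IsProbabilityMeasure β]
    (h : X → ℝ) (hh : Measurable h) (K : ℝ) (hK : 0 ≤ K)
    (h0 : ∀ y, 0 ≤ h y) (hb : ∀ y, h y ≤ K) :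
    ∫ y, h y ∂α - ∫ y, h y ∂β ≤
      K * (⨆ (E : Set X) (_ : MeasurableSet E), (α E - β E)).toReal := by
  set S : ENNReal := ⨆ (E : Set X) (_ : MeasurableSet E), (α E - β E) with hSdef
  have hS1 : S ≤ 1 := by
    apply iSup₂_le
    intro E _
    exact le_trans tsub_le_self prob_le_one
  have hSne : S ≠ ⊤ := (hS1.trans_lt ENNReal.one_lt_top).ne
  have hint : ∀ (γ : Measure X), IsProbabilityMeasure γ → Integrable h γ := by
    intro γ _
    apply Integrable.mono' (integrable_const K) hh.aestronglyMeasurable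
    filter_upwards with y
    rw [Real.norm_eq_abs, abs_of_nonneg (h0 y)]; exact hb y
  have hmeasF : ∀ (γ : Measure X), Measurable fun s : ℝ => (γ {a | s < h a}).toReal := by
    intro γ
    apply ENNReal.measurable_toReal.comp
    apply Antitone.measurable
    intro s t hst
    exact measure_mono fun a ha => lt_of_le_of_lt hst ha
  have hintF : ∀ (γ : Measure X), IsProbabilityMeasure γ →
      IntegrableOn (fun s : ℝ => (γ {a | s < h a}).toReal) (Ioi 0) := by
    intro γ _
    have hvol : (volume.restrict (Ioi (0:ℝ))) (Ioc 0 K) = ENNReal.ofReal K := by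
      rw [Measure.restrict_apply measurableSet_Ioc, inter_eq_left.mpr Ioc_subset_Ioi_self,
        Real.volume_Ioc]
      norm_num
    apply Integrable.mono' (g := (Ioc (0:ℝ) K).indicator fun _ => (1:ℝ))
      ((integrable_indicator_iff measurableSet_Ioc).mpr
        (integrableOn_const (by rw [hvol]; exact ENNReal.ofReal_ne_top)))
      ((hmeasF γ).aestronglyMeasurable.restrict)
    rw [ae_restrict_iff' measurableSet_Ioi]
    filter_upwards with s hs
    rcases le_or_gt s K with hsK | hsK
    · rw [indicator_of_mem (mem_Ioc.mpr ⟨hs, hsK⟩), Real.norm_eq_abs,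
        abs_of_nonneg ENNReal.toReal_nonneg]
      exact ENNReal.toReal_le_of_le_ofReal zero_le_one (by simpa using prob_le_one)
    · have hempty : {a | s < h a} = ∅ := by
        ext a; simp only [mem_setOf_eq, mem_empty_iff_false, iff_false, not_lt]
        exact (hb a).trans hsK.le
      rw [indicator_of_notMem (fun hmem => absurd (mem_Ioc.mp hmem).2 (not_le.mpr hsK))]
      simp [hempty]
  rw [(hint α ‹_›).integral_eq_integral_meas_lt (Filter.Eventually.of_forall h0),
      (hint β ‹_›).integral_eq_integral_meas_lt (Filter.Eventually.of_forall h0)]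
  simp only [measureReal_def]
  rw [← integral_sub (hintF α ‹_›) (hintF β ‹_›)]
  have hpt : ∀ s ∈ Ioi (0:ℝ),
      (α {a | s < h a}).toReal - (β {a | s < h a}).toReal
        ≤ (Ioc (0:ℝ) K).indicator (fun _ => S.toReal) s := by
    intro s hs
    rcases le_or_gt s K with hsK | hsK
    · rw [indicator_of_mem (mem_Ioc.mpr ⟨hs, hsK⟩)]
      set E := {a | s < h a}
      have h1 : α E ≤ (α E - β E) + β E := le_tsub_add
      have h2 : (α E).toReal ≤ (α E - β E).toReal + (β E).toReal := by
        have := ENNReal.toReal_mono (by finiteness) h1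
        rwa [ENNReal.toReal_add (by finiteness) (by finiteness)] at this
      have h3 : (α E - β E).toReal ≤ S.toReal := by
        apply ENNReal.toReal_mono hSne
        exact le_iSup₂_of_le E (measurableSet_lt measurable_const hh) le_rfl
      linarith
    · have hempty : {a | s < h a} = ∅ := by
        ext a; simp only [mem_setOf_eq, mem_empty_iff_false, iff_false, not_lt]
        exact (hb a).trans hsK.le
      rw [indicator_of_notMem (fun hmem => absurd (mem_Ioc.mp hmem).2 (not_le.mpr hsK))]
      simp [hempty]
  calc ∫ s in Ioi (0:ℝ), ((α {a | s < h a}).toReal - (β {a | s < h a}).toReal)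
      ≤ ∫ s in Ioi (0:ℝ), (Ioc (0:ℝ) K).indicator (fun _ => S.toReal) s := by
        have hvol : (volume.restrict (Ioi (0:ℝ))) (Ioc 0 K) = ENNReal.ofReal K := by
          rw [Measure.restrict_apply measurableSet_Ioc, inter_eq_left.mpr Ioc_subset_Ioi_self,
            Real.volume_Ioc]
          norm_num
        apply integral_mono_ae ((hintF α ‹_›).sub (hintF β ‹_›))
          ((integrable_indicator_iff measurableSet_Ioc).mpr
            (integrableOn_const (by rw [hvol]; exact ENNReal.ofReal_ne_top)))
        refine (ae_restrict_iff' measurableSet_Ioi).2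
          (Filter.Eventually.of_forall fun s hs => ?_)
        simpa using hpt s hs
    _ = K * S.toReal := by
        have hvol : (volume.restrict (Ioi (0:ℝ))) (Ioc 0 K) = ENNReal.ofReal K := by
          rw [Measure.restrict_apply measurableSet_Ioc, inter_eq_left.mpr Ioc_subset_Ioi_self,
            Real.volume_Ioc]
          norm_num
        rw [integral_indicator measurableSet_Ioc, setIntegral_const, measureReal_def, hvol, smul_eq_mul,
          ENNReal.toReal_ofReal hK]

lemma tv_lemma2 {X : Type*} [MeasurableSpace X]
    (α β : Measure X) [IsProbabilityMeasure α] [IsProbabilityMeasure β]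
    (g : X → ℝ) (hg : Measurable g) (M : ℝ) (hM : 0 ≤ M) (hb : ∀ y, |g y| ≤ M) :
    |∫ y, g y ∂α - ∫ y, g y ∂β| ≤ 2 * M * tvNorm α β := by
  have hint : ∀ (γ : Measure X), IsProbabilityMeasure γ → Integrable g γ := by
    intro γ _
    exact Integrable.mono' (integrable_const M) hg.aestronglyMeasurable
      (Filter.Eventually.of_forall fun y => by rw [Real.norm_eq_abs]; exact hb y)
  have cancel : ∀ (γ : Measure X), IsProbabilityMeasure γ →
      ∫ y, (g y + M) ∂γ = ∫ y, g y ∂γ + M := by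
    intro γ hγ
    rw [integral_add (hint γ hγ) (integrable_const M), integral_const]
    simp
  have key : ∀ (γ δ : Measure X), IsProbabilityMeasure γ → IsProbabilityMeasure δ →
      ∫ y, g y ∂γ - ∫ y, g y ∂δ ≤
        2 * M * (⨆ (E : Set X) (_ : MeasurableSet E), (γ E - δ E)).toReal := by
    intro γ δ hγ hδ
    have h1 := tv_lemma1 γ δ (fun y => g y + M) (hg.add_const M) (2*M) (by linarith)
        (fun y => by have := (abs_le.mp (hb y)).1; show 0 ≤ g y + M; linarith)
        (fun y => by have := (abs_le.mp (hb y)).2; show g y + M ≤ 2 * M; linarith)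
    rw [cancel γ hγ, cancel δ hδ] at h1
    linarith
  have t1 := key α β ‹_› ‹_›
  have t2 := key β α ‹_› ‹_›
  have n1 : 0 ≤ (⨆ (E : Set X) (_ : MeasurableSet E), (α E - β E)).toReal :=
    ENNReal.toReal_nonneg
  have n2 : 0 ≤ (⨆ (E : Set X) (_ : MeasurableSet E), (β E - α E)).toReal :=
    ENNReal.toReal_nonneg
  have h2M : (0:ℝ) ≤ 2 * M := by linarith
  unfold tvNorm
  rw [abs_le]
  constructor
  · nlinarith [mul_nonneg h2M n1]
  · nlinarith [mul_nonneg h2M n2]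

/-- if `w` is Borel measurable with polynomial growth
`|w(x)| ≤ C_w(1+|x|^m̃)`, harmonic in the sense `w(x) = ∫ w dμ_t^x` for all `t ≥ 0`
and `x`, and centered `∫ w dμ = 0`, then `w ≡ 0` (uniqueness of the solution of the
integral Poisson equation in the class of centered Borel functions of polynomial growth). -/
theorem stmt5
    (d : ℕ) (hd : 1 ≤ d)
    (P : ℝ → EuclideanSpace ℝ (Fin d) → Measure (EuclideanSpace ℝ (Fin d)))
    (μ : Measure (EuclideanSpace ℝ (Fin d)))
    (hP : ∀ t x, 0 ≤ t → IsProbabilityMeasure (P t x))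
    (hμ : IsProbabilityMeasure μ)
    (hmeas : ∀ E : Set (EuclideanSpace ℝ (Fin d)), MeasurableSet E →
      Measurable (fun p : ℝ × EuclideanSpace ℝ (Fin d) => P p.1 p.2 E))
    (hP1 : ∀ m m' : ℝ, 0 < m → m + 2 < m' → ∃ C : ℝ, ∀ t x, 0 ≤ t →
      ∫⁻ y, ENNReal.ofReal (‖y‖ ^ m) ∂(P t x) ≤ ENNReal.ofReal (C * (1 + ‖x‖ ^ m')))
    (hP2 : ∀ m : ℝ, 0 < m → ∫⁻ y, ENNReal.ofReal (‖y‖ ^ m) ∂μ < ⊤)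
    (hP3 : ∀ k m : ℝ, 0 < k → 2 * k + 2 < m → ∃ C : ℝ, ∀ t x, 0 ≤ t →
      tvNorm (P t x) μ ≤ C * (1 + ‖x‖ ^ m) * (1 + t) ^ (-(k + 1)))
    (w : EuclideanSpace ℝ (Fin d) → ℝ) (hw : Measurable w)
    (Cw mt : ℝ) (hmt : 0 ≤ mt)
    (hwb : ∀ x, |w x| ≤ Cw * (1 + ‖x‖ ^ mt))
    (hwharm : ∀ t : ℝ, 0 ≤ t → ∀ x, w x = ∫ y, w y ∂(P t x))
    (hwμ : ∫ x, w x ∂μ = 0) :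
    ∀ x, w x = 0 := by
  -- Cw is nonnegative
  have hCw : 0 ≤ Cw := by
    by_contra hc
    push_neg at hc
    have hz : (0:ℝ) ≤ ‖(0 : EuclideanSpace ℝ (Fin d))‖ ^ mt :=
      Real.rpow_nonneg (norm_nonneg _) mt
    have hneg : Cw * (1 + ‖(0 : EuclideanSpace ℝ (Fin d))‖ ^ mt) < 0 :=
      mul_neg_of_neg_of_pos hc (by linarith)
    linarith [abs_nonneg (w 0), hwb 0]
  -- measurability of the moment function
  have hmom_meas : Measurable fun y : EuclideanSpace ℝ (Fin d) => ‖y‖ ^ (mt+1) :=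
    ((Real.continuous_rpow_const (by linarith)).comp continuous_norm).measurable
  have hmom_nn : ∀ y : EuclideanSpace ℝ (Fin d), 0 ≤ ‖y‖ ^ (mt+1) :=
    fun y => Real.rpow_nonneg (norm_nonneg y) _
  -- moments: from lintegral bounds to Bochner bounds
  have moment : ∀ (γ : Measure (EuclideanSpace ℝ (Fin d))), IsProbabilityMeasure γ →
      ∀ A : ℝ, 0 ≤ A → (∫⁻ y, ENNReal.ofReal (‖y‖ ^ (mt+1)) ∂γ ≤ ENNReal.ofReal A) →
      Integrable (fun y => ‖y‖ ^ (mt+1)) γ ∧ ∫ y, ‖y‖ ^ (mt+1) ∂γ ≤ A := by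
    intro γ hγ A hA hbound
    have hnn : (0 : EuclideanSpace ℝ (Fin d) → ℝ) ≤ᵐ[γ] fun y => ‖y‖ ^ (mt+1) :=
      Filter.Eventually.of_forall hmom_nn
    have hintm : Integrable (fun y => ‖y‖ ^ (mt+1)) γ :=
      ⟨hmom_meas.aestronglyMeasurable,
        (hasFiniteIntegral_iff_ofReal hnn).2 (lt_of_le_of_lt hbound ENNReal.ofReal_lt_top)⟩
    refine ⟨hintm, ?_⟩
    rw [integral_eq_lintegral_of_nonneg_ae hnn hmom_meas.aestronglyMeasurable]
    calc (∫⁻ y, ENNReal.ofReal (‖y‖ ^ (mt+1)) ∂γ).toReal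
        ≤ (ENNReal.ofReal A).toReal :=
          ENNReal.toReal_mono ENNReal.ofReal_ne_top hbound
      _ = A := ENNReal.toReal_ofReal hA
  -- growth comparison
  have fact1 : ∀ y : EuclideanSpace ℝ (Fin d), ‖y‖ ^ mt ≤ 1 + ‖y‖ ^ (mt+1) := by
    intro y
    rcases le_or_gt ‖y‖ 1 with hy | hy
    · have h1 := Real.rpow_le_one (norm_nonneg y) hy hmt
      have h2 := hmom_nn y
      linarith
    · have h1 := Real.rpow_le_rpow_of_exponent_le hy.le (by linarith : mt ≤ mt+1)
      linarith
  -- integrability of w against measures with finite (mt+1)-moment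
  have hwint : ∀ (γ : Measure (EuclideanSpace ℝ (Fin d))), IsProbabilityMeasure γ →
      Integrable (fun y => ‖y‖ ^ (mt+1)) γ → Integrable w γ := by
    intro γ hγ hm
    apply Integrable.mono' ((hm.const_mul Cw).add (integrable_const (2*Cw)))
      hw.aestronglyMeasurable
    filter_upwards with y
    rw [Real.norm_eq_abs]
    have h1 := hwb y
    have h2 := mul_le_mul_of_nonneg_left (fact1 y) hCw
    show |w y| ≤ Cw * ‖y‖ ^ (mt+1) + 2*Cw
    nlinarith
  -- tail comparison
  have fact2 : ∀ t : ℝ, 1 ≤ t → ∀ y : EuclideanSpace ℝ (Fin d), t < ‖y‖ →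
      Cw * (1 + ‖y‖ ^ mt) ≤ 2*Cw/t * ‖y‖ ^ (mt+1) := by
    intro t ht y hty
    have ht0 : (0:ℝ) < t := by linarith
    have hy0 : (0:ℝ) < ‖y‖ := by linarith
    have hp1 : ‖y‖ ^ (mt+1) = ‖y‖ ^ mt * ‖y‖ := by
      rw [Real.rpow_add_one (ne_of_gt hy0) mt]
    have h1 : t ≤ ‖y‖ ^ (mt+1) := by
      have := Real.rpow_le_rpow_of_exponent_le (by linarith : (1:ℝ) ≤ ‖y‖)
        (by linarith : (1:ℝ) ≤ mt+1)
      rw [Real.rpow_one] at this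
      linarith
    have h2 : t * ‖y‖ ^ mt ≤ ‖y‖ ^ (mt+1) := by
      rw [hp1]
      have := mul_le_mul_of_nonneg_left hty.le (Real.rpow_nonneg (norm_nonneg y) mt)
      linarith [this]
    rw [div_mul_eq_mul_div, le_div_iff₀ ht0]
    nlinarith [mul_le_mul_of_nonneg_left h1 hCw, mul_le_mul_of_nonneg_left h2 hCw]
  -- constants from the assumptions
  obtain ⟨C1, hC1⟩ := hP1 (mt+1) (mt+4) (by linarith) (by linarith)
  obtain ⟨C3, hC3⟩ := hP3 (mt+1) (2*mt+5) (by linarith) (by linarith)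
  set C1' := max C1 0 with hC1'def
  set C3' := max C3 0 with hC3'def
  have hC1'0 : 0 ≤ C1' := le_max_right _ _
  have hC3'0 : 0 ≤ C3' := le_max_right _ _
  intro x
  have hxm4 : (0:ℝ) ≤ ‖x‖ ^ (mt+4) := Real.rpow_nonneg (norm_nonneg x) _
  have hxm5 : (0:ℝ) ≤ ‖x‖ ^ (2*mt+5) := Real.rpow_nonneg (norm_nonneg x) _
  set A := C1' * (1 + ‖x‖ ^ (mt+4)) with hAdef
  have hA : 0 ≤ A := mul_nonneg hC1'0 (by linarith)
  set Mμ := (∫⁻ y, ENNReal.ofReal (‖y‖ ^ (mt+1)) ∂μ).toReal with hMμdef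
  have hMμ0 : 0 ≤ Mμ := ENNReal.toReal_nonneg
  obtain ⟨hintμ, hIμ⟩ := moment μ hμ Mμ hMμ0 (by
    rw [hMμdef, ENNReal.ofReal_toReal (hP2 (mt+1) (by linarith)).ne])
  have hwintμ := hwint μ hμ hintμ
  set K := 4*Cw*C3'*(1 + ‖x‖ ^ (2*mt+5)) + 2*Cw*A + 2*Cw*Mμ with hKdef
  have hmain : ∀ t : ℝ, 1 ≤ t → |w x| ≤ K / t := by
    intro t ht
    have ht0 : (0:ℝ) ≤ t := by linarith
    have htpos : (0:ℝ) < t := by linarith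
    haveI hPt : IsProbabilityMeasure (P t x) := hP t x ht0
    obtain ⟨hintP, hIP⟩ := moment (P t x) hPt A hA
      (le_trans (hC1 t x ht0) (ENNReal.ofReal_le_ofReal
        (mul_le_mul_of_nonneg_right (le_max_left _ _) (by linarith))))
    have hwintP := hwint (P t x) hPt hintP
    set B : Set (EuclideanSpace ℝ (Fin d)) := {y | ‖y‖ ≤ t} with hBdef
    have hB : MeasurableSet B := measurableSet_le measurable_norm measurable_const
    set g : EuclideanSpace ℝ (Fin d) → ℝ := B.indicator w with hgdef
    have hgmeas : Measurable g := hw.indicator hB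
    have htmt : 0 ≤ t ^ mt := Real.rpow_nonneg ht0 mt
    have hMbnn : 0 ≤ Cw * (1 + t ^ mt) := mul_nonneg hCw (by linarith)
    have hMb : ∀ y, |g y| ≤ Cw * (1 + t ^ mt) := by
      intro y
      by_cases hy : y ∈ B
      · rw [hgdef, indicator_of_mem hy]
        have h2 : ‖y‖ ^ mt ≤ t ^ mt := Real.rpow_le_rpow (norm_nonneg y) hy hmt
        have h3 := mul_le_mul_of_nonneg_left (by linarith : 1 + ‖y‖^mt ≤ 1 + t^mt) hCw
        linarith [hwb y]
      · rw [hgdef, indicator_of_notMem hy, abs_zero]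
        exact hMbnn
    have hgintP : Integrable g (P t x) := by
      apply Integrable.mono' hwintP.abs hgmeas.aestronglyMeasurable
      filter_upwards with y
      rw [Real.norm_eq_abs]
      by_cases hy : y ∈ B
      · rw [hgdef, indicator_of_mem hy]
      · rw [hgdef, indicator_of_notMem hy, abs_zero]; exact abs_nonneg _
    have hgintμ : Integrable g μ := by
      apply Integrable.mono' hwintμ.abs hgmeas.aestronglyMeasurable
      filter_upwards with y
      rw [Real.norm_eq_abs]
      by_cases hy : y ∈ B
      · rw [hgdef, indicator_of_mem hy]
      · rw [hgdef, indicator_of_notMem hy, abs_zero]; exact abs_nonneg _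
    have hcoef : (0:ℝ) ≤ 2*Cw/t := div_nonneg (by linarith) ht0
    have htail_pt : ∀ y, |w y - g y| ≤ 2*Cw/t * ‖y‖ ^ (mt+1) := by
      intro y
      by_cases hy : y ∈ B
      · rw [hgdef, indicator_of_mem hy, sub_self, abs_zero]
        exact mul_nonneg hcoef (hmom_nn y)
      · rw [hgdef, indicator_of_notMem hy, sub_zero]
        have hty : t < ‖y‖ := not_le.mp hy
        exact (hwb y).trans (fact2 t ht y hty)
    have tail : ∀ (γ : Measure (EuclideanSpace ℝ (Fin d))), IsProbabilityMeasure γ →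
        ∀ (hwg : Integrable w γ) (hgg : Integrable g γ)
        (hmg : Integrable (fun y => ‖y‖ ^ (mt+1)) γ) (I : ℝ),
        (∫ y, ‖y‖ ^ (mt+1) ∂γ ≤ I) →
        |∫ y, w y ∂γ - ∫ y, g y ∂γ| ≤ 2*Cw/t * I := by
      intro γ hγ hwg hgg hmg I hI
      rw [← integral_sub hwg hgg]
      calc |∫ y, (w y - g y) ∂γ| ≤ ∫ y, |w y - g y| ∂γ := by
            simpa [Real.norm_eq_abs] using
              norm_integral_le_integral_norm (μ := γ) (fun y => w y - g y)
        _ ≤ ∫ y, 2*Cw/t * ‖y‖ ^ (mt+1) ∂γ :=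
            integral_mono (hwg.sub hgg).abs (hmg.const_mul _) (fun y => htail_pt y)
        _ = 2*Cw/t * ∫ y, ‖y‖ ^ (mt+1) ∂γ := integral_const_mul _ _
        _ ≤ 2*Cw/t * I := mul_le_mul_of_nonneg_left hI hcoef
    have tailP := tail (P t x) hPt hwintP hgintP hintP A hIP
    have tailμ := tail μ hμ hwintμ hgintμ hintμ Mμ hIμ
    have T1 := tv_lemma2 (P t x) μ g hgmeas _ hMbnn hMb
    have htv : tvNorm (P t x) μ ≤ C3' * (1 + ‖x‖ ^ (2*mt+5)) * (1+t) ^ (-(mt+1+1)) := by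
      refine le_trans (hC3 t x ht0) ?_
      have h1t : (0:ℝ) ≤ (1+t) ^ (-(mt+1+1)) := Real.rpow_nonneg (by linarith) _
      exact mul_le_mul_of_nonneg_right
        (mul_le_mul_of_nonneg_right (le_max_left _ _) (by linarith)) h1t
    have hdecay : (1 + t ^ mt) * (1+t) ^ (-(mt+1+1)) ≤ 2 / t := by
      have h1t : (0:ℝ) < 1 + t := by linarith
      have e1 : (1:ℝ) ≤ (1+t) ^ mt := Real.one_le_rpow (by linarith) hmt
      have e2 : t ^ mt ≤ (1+t) ^ mt := Real.rpow_le_rpow ht0 (by linarith) hmt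
      have e3 : (1+t) ^ mt * (1+t) ^ (-(mt+1+1)) = (1+t) ^ (-(2:ℝ)) := by
        rw [← Real.rpow_add h1t]; ring_nf
      have e4 : (1+t) ^ (-(2:ℝ)) ≤ (1+t) ^ (-(1:ℝ)) :=
        Real.rpow_le_rpow_of_exponent_le (by linarith) (by norm_num)
      have e5 : (1+t) ^ (-(1:ℝ)) = (1+t)⁻¹ := Real.rpow_neg_one _
      have e6 : (1+t)⁻¹ ≤ 1/t := by
        rw [one_div]
        exact inv_anti₀ htpos (by linarith)
      have e7 : 0 ≤ (1+t) ^ (-(mt+1+1)) := Real.rpow_nonneg (by linarith) _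
      have e8 : (1+t) ^ (-(2:ℝ)) ≤ 1/t := by rw [e5] at e4; linarith
      calc (1 + t ^ mt) * (1+t) ^ (-(mt+1+1))
          ≤ (2 * (1+t) ^ mt) * (1+t) ^ (-(mt+1+1)) := by nlinarith
        _ = 2 * (1+t) ^ (-(2:ℝ)) := by rw [mul_assoc, e3]
        _ ≤ 2 * (1/t) := by linarith
        _ = 2 / t := by ring
    have T1' : |∫ y, g y ∂(P t x) - ∫ y, g y ∂μ| ≤ 4*Cw*C3'*(1 + ‖x‖ ^ (2*mt+5)) / t := by
      refine T1.trans ?_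
      calc 2 * (Cw * (1 + t ^ mt)) * tvNorm (P t x) μ
          ≤ 2 * (Cw * (1 + t ^ mt)) * (C3' * (1 + ‖x‖ ^ (2*mt+5)) * (1+t) ^ (-(mt+1+1))) :=
            mul_le_mul_of_nonneg_left htv (by linarith)
        _ = (2 * Cw * C3' * (1 + ‖x‖ ^ (2*mt+5))) * ((1 + t ^ mt) * (1+t) ^ (-(mt+1+1))) := by
            ring
        _ ≤ (2 * Cw * C3' * (1 + ‖x‖ ^ (2*mt+5))) * (2 / t) := by
            apply mul_le_mul_of_nonneg_left hdecay
            have := mul_nonneg (mul_nonneg (mul_nonneg (by norm_num : (0:ℝ) ≤ 2) hCw) hC3'0)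
              (by linarith : (0:ℝ) ≤ 1 + ‖x‖ ^ (2*mt+5))
            linarith
        _ = 4*Cw*C3'*(1 + ‖x‖ ^ (2*mt+5)) / t := by ring
    have hwx : w x = ∫ y, w y ∂(P t x) := hwharm t ht0 x
    have step : |w x| ≤ |∫ y, w y ∂(P t x) - ∫ y, g y ∂(P t x)|
        + |∫ y, g y ∂(P t x) - ∫ y, g y ∂μ| + |∫ y, g y ∂μ - ∫ y, w y ∂μ| := by
      have habc := abs_sub_le (∫ y, w y ∂(P t x)) (∫ y, g y ∂(P t x)) (∫ y, w y ∂μ)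
      have habc2 := abs_sub_le (∫ y, g y ∂(P t x)) (∫ y, g y ∂μ) (∫ y, w y ∂μ)
      have heq : |w x| = |∫ y, w y ∂(P t x) - ∫ y, w y ∂μ| := by rw [hwμ, sub_zero, ← hwx]
      linarith
    have tailμ' : |∫ y, g y ∂μ - ∫ y, w y ∂μ| ≤ 2*Cw/t * Mμ := by
      rw [abs_sub_comm]; exact tailμ
    calc |w x| ≤ (2*Cw/t * A) + (4*Cw*C3'*(1 + ‖x‖ ^ (2*mt+5)) / t) + (2*Cw/t * Mμ) := by
          linarith [tailP, T1', tailμ', step]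
      _ = K / t := by rw [hKdef]; field_simp; ring
  have hlim : Filter.Tendsto (fun t : ℝ => K / t) Filter.atTop (nhds 0) := by
    simpa [div_eq_mul_inv] using tendsto_inv_atTop_zero.const_mul K
  have hle : |w x| ≤ 0 :=
    ge_of_tendsto hlim (Filter.eventually_atTop.2 ⟨1, fun t ht => hmain t ht⟩)
  exact abs_eq_zero.mp (le_antisymm hle (abs_nonneg (w x)))
end

section
/- If, in addition, for each t > 0 the map x ↦ ∫ f(y) μ_t^x(dy) is continuous on ℝ^d, then the function u(x) = ∫_0^∞ (∫ f(y) μ_t^x(dy)) dt is continuous on ℝ^d. -/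
open MeasureTheory Set

section Aux

variable {α : Type*} [MeasurableSpace α]

lemma integrable_of_abs_le (ν : Measure α) [IsFiniteMeasure ν] {g : α → ℝ} (hg : Measurable g)
    {M : ℝ} (hgb : ∀ y, |g y| ≤ M) : Integrable g ν :=
  (integrable_const M).mono' hg.aestronglyMeasurable
    (Filter.Eventually.of_forall fun y => by simpa [Real.norm_eq_abs] using hgb y)

lemma iSup_diff_ne_top (p q : Measure α) [IsFiniteMeasure p] :
    (⨆ (E : Set α) (_ : MeasurableSet E), (p E - q E)) ≠ ⊤ := by
  refine ne_top_of_le_ne_top (measure_ne_top p univ) ?_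
  exact iSup₂_le fun E _ => tsub_le_self.trans (measure_mono (subset_univ E))

lemma sub_integral_bound (a b : Measure α) [IsFiniteMeasure a] [IsFiniteMeasure b] (hba : b ≤ a)
    {g : α → ℝ} (hg : Measurable g) {M : ℝ} (hgb : ∀ y, |g y| ≤ M) :
    |∫ y, g y ∂a - ∫ y, g y ∂b| ≤ M * (a univ - b univ).toReal := by
  have ha : ∫ y, g y ∂a = ∫ y, g y ∂(a - b) + ∫ y, g y ∂b := by
    conv_lhs => rw [← Measure.sub_add_cancel_of_le hba]
    rw [integral_add_measure (integrable_of_abs_le _ hg hgb) (integrable_of_abs_le _ hg hgb)]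
  have hsub : (a - b) univ = a univ - b univ := Measure.sub_apply MeasurableSet.univ hba
  have := norm_integral_le_of_norm_le_const (μ := a - b) (f := g) (C := M)
    (Filter.Eventually.of_forall fun y => by simpa [Real.norm_eq_abs] using hgb y)
  rw [ha]
  simpa [Real.norm_eq_abs, Measure.real, hsub] using this

lemma tv_integral_bound (p q : Measure α) [IsFiniteMeasure p] [IsFiniteMeasure q]
    {g : α → ℝ} (hg : Measurable g) {M : ℝ} (hM : 0 ≤ M) (hgb : ∀ y, |g y| ≤ M) :
    |∫ y, g y ∂p - ∫ y, g y ∂q| ≤ M * tvNorm p q := by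
  obtain ⟨A, hA, h1, h2⟩ := hahn_decomposition (μ := p) (ν := q)
  have hle1 : q.restrict A ≤ p.restrict A := by
    refine Measure.le_iff.2 fun E hE => ?_
    rw [Measure.restrict_apply hE, Measure.restrict_apply hE]
    exact h1 _ (hE.inter hA) inter_subset_right
  have hle2 : p.restrict Aᶜ ≤ q.restrict Aᶜ := by
    refine Measure.le_iff.2 fun E hE => ?_
    rw [Measure.restrict_apply hE, Measure.restrict_apply hE]
    exact h2 _ (hE.inter hA.compl) inter_subset_right
  have hsplit : ∀ (ν : Measure α) [IsFiniteMeasure ν],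
      ∫ y, g y ∂ν = ∫ y, g y ∂(ν.restrict A) + ∫ y, g y ∂(ν.restrict Aᶜ) := by
    intro ν _
    exact (integral_add_compl hA (integrable_of_abs_le ν hg hgb)).symm
  have d1 := sub_integral_bound (p.restrict A) (q.restrict A) hle1 hg hgb
  have d2 := sub_integral_bound (q.restrict Aᶜ) (p.restrict Aᶜ) hle2 hg hgb
  rw [Measure.restrict_apply_univ, Measure.restrict_apply_univ] at d1 d2
  have e1 : (p A - q A).toReal ≤
      (⨆ (E : Set α) (_ : MeasurableSet E), (p E - q E)).toReal :=
    ENNReal.toReal_mono (iSup_diff_ne_top p q)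
      (le_iSup₂ (f := fun E (_ : MeasurableSet E) => p E - q E) A hA)
  have e2 : (q Aᶜ - p Aᶜ).toReal ≤
      (⨆ (E : Set α) (_ : MeasurableSet E), (q E - p E)).toReal :=
    ENNReal.toReal_mono (iSup_diff_ne_top q p)
      (le_iSup₂ (f := fun E (_ : MeasurableSet E) => q E - p E) Aᶜ hA.compl)
  have habs : |∫ y, g y ∂p - ∫ y, g y ∂q| ≤
      |∫ y, g y ∂(p.restrict A) - ∫ y, g y ∂(q.restrict A)| +
      |∫ y, g y ∂(p.restrict Aᶜ) - ∫ y, g y ∂(q.restrict Aᶜ)| := by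
    rw [hsplit p, hsplit q]
    exact (abs_add_le _ _).trans_eq' (by ring_nf)
  have d2' : |∫ y, g y ∂(p.restrict Aᶜ) - ∫ y, g y ∂(q.restrict Aᶜ)| ≤
      M * (q Aᶜ - p Aᶜ).toReal := by
    rw [abs_sub_comm]; exact d2
  rw [tvNorm, mul_add]
  refine habs.trans (add_le_add (d1.trans ?_) (d2'.trans ?_))
  · exact mul_le_mul_of_nonneg_left e1 hM
  · exact mul_le_mul_of_nonneg_left e2 hM

end Aux

set_option maxHeartbeats 1000000 in
/-- if in addition for each `t > 0` the map `x ↦ ∫ f dμ_t^x` is continuous,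
then `u(x) = ∫_0^∞ (∫ f dμ_t^x) dt` is continuous on `ℝ^d`. -/
theorem stmt6
    (d : ℕ) (hd : 1 ≤ d)
    (P : ℝ → EuclideanSpace ℝ (Fin d) → Measure (EuclideanSpace ℝ (Fin d)))
    (μ : Measure (EuclideanSpace ℝ (Fin d)))
    (hP : ∀ t x, 0 ≤ t → IsProbabilityMeasure (P t x))
    (hμ : IsProbabilityMeasure μ)
    (hmeas : ∀ E : Set (EuclideanSpace ℝ (Fin d)), MeasurableSet E →
      Measurable (fun p : ℝ × EuclideanSpace ℝ (Fin d) => P p.1 p.2 E))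
    (hP1 : ∀ m m' : ℝ, 0 < m → m + 2 < m' → ∃ C : ℝ, ∀ t x, 0 ≤ t →
      ∫⁻ y, ENNReal.ofReal (‖y‖ ^ m) ∂(P t x) ≤ ENNReal.ofReal (C * (1 + ‖x‖ ^ m')))
    (hP2 : ∀ m : ℝ, 0 < m → ∫⁻ y, ENNReal.ofReal (‖y‖ ^ m) ∂μ < ⊤)
    (hP3 : ∀ k m : ℝ, 0 < k → 2 * k + 2 < m → ∃ C : ℝ, ∀ t x, 0 ≤ t →
      tvNorm (P t x) μ ≤ C * (1 + ‖x‖ ^ m) * (1 + t) ^ (-(k + 1)))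
    (β Cf : ℝ) (hβ : 0 ≤ β) (hCf : 1 ≤ Cf)
    (f : EuclideanSpace ℝ (Fin d) → ℝ) (hf : Measurable f)
    (hfb : ∀ y, |f y| ≤ Cf * (1 + ‖y‖ ^ β))
    (hfμ : ∫ y, f y ∂μ = 0)
    (hcont : ∀ t : ℝ, 0 < t → Continuous fun x => ∫ y, f y ∂(P t x)) :
    Continuous fun x => ∫ t in Ioi (0 : ℝ), ∫ y, f y ∂(P t x) := by
  haveI := hμ
  obtain ⟨C1, hC1⟩ := hP1 (β + 2) (β + 5) (by linarith) (by linarith)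
  obtain ⟨C3, hC3⟩ := hP3 (β + 3) (2 * β + 9) (by linarith) (by linarith)
  set C1' : ℝ := max C1 0 with hC1'def
  set C3' : ℝ := max C3 0 with hC3'def
  have hC1'0 : 0 ≤ C1' := le_max_right _ _
  have hC3'0 : 0 ≤ C3' := le_max_right _ _
  set M : ℝ := 2 * β + 9 with hMdef
  have hM0 : (0:ℝ) ≤ M := by rw [hMdef]; linarith
  set Mμ : ℝ := (∫⁻ y, ENNReal.ofReal (‖y‖ ^ (β + 2)) ∂μ).toReal with hMμdef
  have hMμ0 : 0 ≤ Mμ := ENNReal.toReal_nonneg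
  have hCf0 : (0:ℝ) < Cf := lt_of_lt_of_le one_pos hCf
  set K : ℝ := 2 * Cf * C3' + 4 * Cf * C1' + 2 * Cf * Mμ with hKdef
  have hK0 : 0 ≤ K := by rw [hKdef]; positivity
  have hφm : Measurable fun y : EuclideanSpace ℝ (Fin d) => ‖y‖ ^ (β + 2) := by fun_prop
  have hφnn : ∀ y : EuclideanSpace ℝ (Fin d), 0 ≤ ‖y‖ ^ (β + 2) :=
    fun y => Real.rpow_nonneg (norm_nonneg y) _
  have hmom : ∀ (ν : Measure (EuclideanSpace ℝ (Fin d))),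
      (∫⁻ y, ENNReal.ofReal (‖y‖ ^ (β + 2)) ∂ν) ≠ ⊤ →
      Integrable (fun y => ‖y‖ ^ (β + 2)) ν := by
    intro ν hν
    refine ⟨hφm.aestronglyMeasurable, ?_⟩
    rw [hasFiniteIntegral_iff_ofReal (Filter.Eventually.of_forall hφnn)]
    exact hν.lt_top
  have hmomint : ∀ (ν : Measure (EuclideanSpace ℝ (Fin d))),
      ∫ y, ‖y‖ ^ (β + 2) ∂ν = (∫⁻ y, ENNReal.ofReal (‖y‖ ^ (β + 2)) ∂ν).toReal :=
    fun ν => integral_eq_lintegral_of_nonneg_ae (Filter.Eventually.of_forall hφnn)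
      hφm.aestronglyMeasurable
  -- the key decay estimate
  have hkey : ∀ t x, 0 ≤ t →
      |∫ y, f y ∂(P t x)| ≤ K * (1 + ‖x‖ ^ M) * (1 + t) ^ (-2 : ℝ) := by
    intro t x ht
    haveI := hP t x ht
    set R : ℝ := 1 + t with hRdef
    have hR1 : 1 ≤ R := by rw [hRdef]; linarith
    have hR0 : (0:ℝ) < R := lt_of_lt_of_le one_pos hR1
    set A : Set (EuclideanSpace ℝ (Fin d)) := {y | ‖y‖ ≤ R} with hAdef
    have hAm : MeasurableSet A := measurableSet_le measurable_norm measurable_const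
    set g : EuclideanSpace ℝ (Fin d) → ℝ := A.indicator f with hgdef
    have hgm : Measurable g := hf.indicator hAm
    have hRβ0 : (0:ℝ) ≤ R ^ β := Real.rpow_nonneg hR0.le _
    have hMg0 : 0 ≤ Cf * (1 + R ^ β) := by nlinarith
    have hxM0 : (0:ℝ) ≤ ‖x‖ ^ M := Real.rpow_nonneg (norm_nonneg x) _
    have hRm2 : (0:ℝ) ≤ R ^ (-2:ℝ) := Real.rpow_nonneg hR0.le _
    have hgb : ∀ y, |g y| ≤ Cf * (1 + R ^ β) := by
      intro y
      by_cases hy : y ∈ A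
      · rw [hgdef, indicator_of_mem hy]
        refine (hfb y).trans ?_
        have h1 : ‖y‖ ^ β ≤ R ^ β := Real.rpow_le_rpow (norm_nonneg y) hy hβ
        nlinarith
      · rw [hgdef, indicator_of_notMem hy, abs_zero]; exact hMg0
    have hpt : ∀ y, |f y - g y| ≤ 2 * Cf * R ^ (-2:ℝ) * ‖y‖ ^ (β + 2) := by
      intro y
      by_cases hy : y ∈ A
      · rw [hgdef, indicator_of_mem hy, sub_self, abs_zero]
        exact mul_nonneg (mul_nonneg (by linarith) hRm2) (hφnn y)
      · rw [hgdef, indicator_of_notMem hy, sub_zero]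
        have hyR : R < ‖y‖ := lt_of_not_ge hy
        have hy1 : 1 ≤ ‖y‖ := hR1.trans hyR.le
        have hy0 : (0:ℝ) < ‖y‖ := lt_of_lt_of_le one_pos hy1
        have e3 : R ^ (2:ℝ) ≤ ‖y‖ ^ (2:ℝ) := Real.rpow_le_rpow hR0.le hyR.le (by norm_num)
        have e1 : R ^ (2:ℝ) ≤ ‖y‖ ^ (β + 2) := by
          refine e3.trans (Real.rpow_le_rpow_of_exponent_le hy1 (by linarith))
        have e4 : ‖y‖ ^ (β + 2) = ‖y‖ ^ β * ‖y‖ ^ (2:ℝ) := Real.rpow_add hy0 _ _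
        have e5 : (0:ℝ) ≤ ‖y‖ ^ β := Real.rpow_nonneg (norm_nonneg y) _
        have hR2 : (0:ℝ) < R ^ (2:ℝ) := Real.rpow_pos_of_pos hR0 _
        have hinv : R ^ (-2:ℝ) = (R ^ (2:ℝ))⁻¹ := by
          rw [show (-2:ℝ) = -(2:ℝ) by norm_num, Real.rpow_neg hR0.le]
        refine (hfb y).trans ?_
        rw [hinv]
        have key : R ^ (2:ℝ) * (1 + ‖y‖ ^ β) ≤ 2 * ‖y‖ ^ (β + 2) := by
          nlinarith [mul_le_mul_of_nonneg_right e3 e5]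
        have h6 : 1 + ‖y‖ ^ β ≤ 2 * (R ^ (2:ℝ))⁻¹ * ‖y‖ ^ (β + 2) := by
          have h7 := mul_le_mul_of_nonneg_left key (inv_nonneg.mpr hR2.le)
          have h8 : (R ^ (2:ℝ))⁻¹ * R ^ (2:ℝ) = 1 := inv_mul_cancel₀ hR2.ne'
          nlinarith
        nlinarith [mul_le_mul_of_nonneg_left h6 hCf0.le]
    -- truncated part via total variation
    have htv2 : |∫ y, g y ∂(P t x) - ∫ y, g y ∂μ| ≤
        Cf * (1 + R ^ β) * (C3' * (1 + ‖x‖ ^ M) * R ^ (-(β + 3 + 1))) := by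
      refine (tv_integral_bound (P t x) μ hgm hMg0 hgb).trans
        (mul_le_mul_of_nonneg_left ((hC3 t x ht).trans ?_) hMg0)
      have h1 : (0:ℝ) ≤ 1 + ‖x‖ ^ M := by linarith
      have h2 : (0:ℝ) ≤ R ^ (-(β + 3 + 1)) := Real.rpow_nonneg hR0.le _
      nlinarith [mul_le_mul_of_nonneg_right
        (mul_le_mul_of_nonneg_right (le_max_left C3 0) h1) h2]
    -- tail parts
    have hLP := hC1 t x ht
    have hLPne : (∫⁻ y, ENNReal.ofReal (‖y‖ ^ (β + 2)) ∂(P t x)) ≠ ⊤ :=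
      ne_top_of_le_ne_top ENNReal.ofReal_ne_top hLP
    have hintP : Integrable (fun y => ‖y‖ ^ (β + 2)) (P t x) := hmom _ hLPne
    have hintμ : Integrable (fun y => ‖y‖ ^ (β + 2)) μ := hmom _ (hP2 (β + 2) (by linarith)).ne
    have hgP : Integrable g (P t x) := integrable_of_abs_le _ hgm hgb
    have hgμ : Integrable g μ := integrable_of_abs_le _ hgm hgb
    have heP : Integrable (fun y => f y - g y) (P t x) :=
      (hintP.const_mul (2 * Cf * R ^ (-2:ℝ))).mono' (hf.sub hgm).aestronglyMeasurable
        (Filter.Eventually.of_forall fun y => by simpa [Real.norm_eq_abs] using hpt y)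
    have heμ : Integrable (fun y => f y - g y) μ :=
      (hintμ.const_mul (2 * Cf * R ^ (-2:ℝ))).mono' (hf.sub hgm).aestronglyMeasurable
        (Filter.Eventually.of_forall fun y => by simpa [Real.norm_eq_abs] using hpt y)
    have htail : ∀ (ν : Measure (EuclideanSpace ℝ (Fin d))) [IsFiniteMeasure ν],
        Integrable (fun y => ‖y‖ ^ (β + 2)) ν →
        |∫ y, (f y - g y) ∂ν| ≤ 2 * Cf * R ^ (-2:ℝ) *
          (∫⁻ y, ENNReal.ofReal (‖y‖ ^ (β + 2)) ∂ν).toReal := by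
      intro ν _ hi
      have h1 : ‖∫ y, (f y - g y) ∂ν‖ ≤ ∫ y, 2 * Cf * R ^ (-2:ℝ) * ‖y‖ ^ (β + 2) ∂ν :=
        norm_integral_le_of_norm_le (hi.const_mul _)
          (Filter.Eventually.of_forall fun y => by simpa [Real.norm_eq_abs] using hpt y)
      rw [Real.norm_eq_abs, integral_const_mul] at h1
      rwa [hmomint ν] at h1
    have htailP := htail (P t x) hintP
    have htailμ := htail μ hintμ
    -- numeric bound for the P-moment
    have hw : (0:ℝ) ≤ 1 + ‖x‖ ^ (β + 5) := by
      have := Real.rpow_nonneg (norm_nonneg x) (β + 5); linarith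
    have hnum : (∫⁻ y, ENNReal.ofReal (‖y‖ ^ (β + 2)) ∂(P t x)).toReal ≤
        C1' * (1 + ‖x‖ ^ (β + 5)) := by
      refine (ENNReal.toReal_mono ENNReal.ofReal_ne_top hLP).trans ?_
      rw [ENNReal.toReal_ofReal']
      refine max_le ?_ (by positivity)
      nlinarith [le_max_left C1 0]
    -- assemble
    have hfP : ∫ y, f y ∂(P t x) = ∫ y, g y ∂(P t x) + ∫ y, (f y - g y) ∂(P t x) := by
      rw [← integral_add hgP heP]; simp
    have hfμ2 : (0:ℝ) = ∫ y, g y ∂μ + ∫ y, (f y - g y) ∂μ := by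
      rw [← integral_add hgμ heμ]; simp [hfμ]
    have habs : |∫ y, f y ∂(P t x)| ≤ |∫ y, g y ∂(P t x) - ∫ y, g y ∂μ| +
        |∫ y, (f y - g y) ∂(P t x)| + |∫ y, (f y - g y) ∂μ| := by
      have hid : ∫ y, f y ∂(P t x) = (∫ y, g y ∂(P t x) - ∫ y, g y ∂μ) +
          ∫ y, (f y - g y) ∂(P t x) - ∫ y, (f y - g y) ∂μ := by
        rw [hfP]; linarith
      rw [hid]
      exact (abs_sub _ _).trans (by gcongr; exact abs_add_le _ _)
    -- rpow arithmetic
    have f1 : R ^ β * R ^ (-(β + 3 + 1)) = R ^ (-4:ℝ) := by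
      rw [← Real.rpow_add hR0, show β + -(β + 3 + 1) = (-4:ℝ) by ring]
    have f2 : R ^ (-4:ℝ) ≤ R ^ (-2:ℝ) := Real.rpow_le_rpow_of_exponent_le hR1 (by norm_num)
    have f3 : 1 + R ^ β ≤ 2 * R ^ β := by
      have := Real.one_le_rpow hR1 hβ; linarith
    have f4 : ‖x‖ ^ (β + 5) ≤ 1 + ‖x‖ ^ M := by
      rcases le_or_gt ‖x‖ 1 with h | h
      · have := Real.rpow_le_one (norm_nonneg x) h (by linarith : (0:ℝ) ≤ β + 5)
        linarith
      · have h1 : ‖x‖ ^ (β + 5) ≤ ‖x‖ ^ M :=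
          Real.rpow_le_rpow_of_exponent_le h.le (by rw [hMdef]; linarith)
        linarith
    have hRe : (0:ℝ) ≤ R ^ (-(β + 3 + 1)) := Real.rpow_nonneg hR0.le _
    have t2 : Cf * (1 + R ^ β) * (C3' * (1 + ‖x‖ ^ M) * R ^ (-(β + 3 + 1))) ≤
        2 * Cf * C3' * (1 + ‖x‖ ^ M) * R ^ (-2:ℝ) := by
      have hnn : (0:ℝ) ≤ Cf * C3' * (1 + ‖x‖ ^ M) := by positivity
      calc Cf * (1 + R ^ β) * (C3' * (1 + ‖x‖ ^ M) * R ^ (-(β + 3 + 1)))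
          = Cf * C3' * (1 + ‖x‖ ^ M) * ((1 + R ^ β) * R ^ (-(β + 3 + 1))) := by ring
        _ ≤ Cf * C3' * (1 + ‖x‖ ^ M) * (2 * R ^ β * R ^ (-(β + 3 + 1))) := by
            refine mul_le_mul_of_nonneg_left ?_ hnn
            exact mul_le_mul_of_nonneg_right f3 hRe
        _ = 2 * Cf * C3' * (1 + ‖x‖ ^ M) * (R ^ β * R ^ (-(β + 3 + 1))) := by ring
        _ = 2 * Cf * C3' * (1 + ‖x‖ ^ M) * R ^ (-4:ℝ) := by rw [f1]
        _ ≤ 2 * Cf * C3' * (1 + ‖x‖ ^ M) * R ^ (-2:ℝ) := by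
            refine mul_le_mul_of_nonneg_left f2 (by positivity)
    have t1 : 2 * Cf * R ^ (-2:ℝ) * (C1' * (1 + ‖x‖ ^ (β + 5))) ≤
        4 * Cf * C1' * (1 + ‖x‖ ^ M) * R ^ (-2:ℝ) := by
      have h5 : 1 + ‖x‖ ^ (β + 5) ≤ 2 * (1 + ‖x‖ ^ M) := by linarith
      nlinarith [mul_le_mul_of_nonneg_left h5 (by positivity : (0:ℝ) ≤ 2 * Cf * R ^ (-2:ℝ) * C1')]
    have t3 : 2 * Cf * R ^ (-2:ℝ) * Mμ ≤ 2 * Cf * Mμ * (1 + ‖x‖ ^ M) * R ^ (-2:ℝ) := by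
      nlinarith [mul_le_mul_of_nonneg_left (by linarith : (1:ℝ) ≤ 1 + ‖x‖ ^ M)
        (by positivity : (0:ℝ) ≤ 2 * Cf * R ^ (-2:ℝ) * Mμ)]
    have hb1 : |∫ y, (f y - g y) ∂(P t x)| ≤
        2 * Cf * R ^ (-2:ℝ) * (C1' * (1 + ‖x‖ ^ (β + 5))) := by
      refine htailP.trans (mul_le_mul_of_nonneg_left hnum (by positivity))
    have hb3 : |∫ y, (f y - g y) ∂μ| ≤ 2 * Cf * R ^ (-2:ℝ) * Mμ := by
      rw [hMμdef]; exact htailμ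
    have hfin : K * (1 + ‖x‖ ^ M) * R ^ (-2:ℝ) =
        2 * Cf * C3' * (1 + ‖x‖ ^ M) * R ^ (-2:ℝ) +
        4 * Cf * C1' * (1 + ‖x‖ ^ M) * R ^ (-2:ℝ) +
        2 * Cf * Mμ * (1 + ‖x‖ ^ M) * R ^ (-2:ℝ) := by rw [hKdef]; ring
    rw [hRdef] at hfin ⊢
    linarith [habs, htv2.trans t2, hb1.trans t1, hb3.trans t3]
  -- continuity via dominated convergence
  rw [continuous_iff_continuousAt]
  intro x₀
  refine continuousAt_of_dominated (bound := fun t => K * (1 + (‖x₀‖ + 1) ^ M) * (1 + t ^ 2)⁻¹)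
    ?_ ?_ ?_ ?_
  · refine Filter.Eventually.of_forall fun x => ?_
    classical
    set Q : ℝ → Measure (EuclideanSpace ℝ (Fin d)) := fun t => if 0 < t then P t x else μ
      with hQdef
    have hQm : Measurable Q := by
      refine Measure.measurable_of_measurable_coe _ fun E hE => ?_
      simp only [hQdef, apply_ite (fun ν : Measure (EuclideanSpace ℝ (Fin d)) => ν E)]
      exact Measurable.ite measurableSet_Ioi
        ((hmeas E hE).comp (measurable_id.prodMk measurable_const)) measurable_const
    let κ : ProbabilityTheory.Kernel ℝ (EuclideanSpace ℝ (Fin d)) := ⟨Q, hQm⟩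
    have hκ : ∀ t, κ t = Q t := fun t => rfl
    haveI : ProbabilityTheory.IsMarkovKernel κ := by
      constructor
      intro t
      rw [hκ t]
      by_cases h : 0 < t
      · simpa [hQdef, h] using hP t x h.le
      · simpa [hQdef, h] using hμ
    have hsm : StronglyMeasurable fun t => ∫ y, f y ∂(κ t) :=
      StronglyMeasurable.integral_kernel_prod_right (κ := κ) (f := fun _ y => f y)
        (hf.comp measurable_snd).stronglyMeasurable
    refine hsm.aestronglyMeasurable.congr ?_
    filter_upwards [self_mem_ae_restrict measurableSet_Ioi] with t ht
    rw [hκ t, hQdef]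
    simp [mem_Ioi.mp ht]
  · filter_upwards [Metric.ball_mem_nhds x₀ one_pos] with x hx
    refine (ae_restrict_iff' measurableSet_Ioi).mpr (Filter.Eventually.of_forall fun t ht => ?_)
    have ht0 : (0:ℝ) < t := ht
    have hxb : ‖x‖ ≤ ‖x₀‖ + 1 := by
      have h1 := norm_sub_norm_le x x₀
      have h2 : ‖x - x₀‖ < 1 := by rwa [Metric.mem_ball, dist_eq_norm] at hx
      linarith
    have h1 : ‖x‖ ^ M ≤ (‖x₀‖ + 1) ^ M := Real.rpow_le_rpow (norm_nonneg x) hxb hM0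
    have h2 : (1 + t) ^ (-2:ℝ) ≤ (1 + t ^ 2)⁻¹ := by
      have e : (1 + t) ^ (-2:ℝ) = ((1 + t) ^ (2:ℕ))⁻¹ := by
        rw [← Real.rpow_natCast (1 + t) 2, ← Real.rpow_neg_one ((1 + t) ^ ((2:ℕ):ℝ)),
          ← Real.rpow_mul (by linarith)]
        norm_num
      rw [e]
      refine inv_anti₀ (by positivity) (by nlinarith)
    rw [Real.norm_eq_abs]
    refine (hkey t x ht0.le).trans ?_
    have h3 : (0:ℝ) ≤ (1 + t) ^ (-2:ℝ) := Real.rpow_nonneg (by linarith) _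
    have h4 : (0:ℝ) ≤ 1 + (‖x₀‖ + 1) ^ M := by positivity
    calc K * (1 + ‖x‖ ^ M) * (1 + t) ^ (-2:ℝ)
        ≤ K * (1 + (‖x₀‖ + 1) ^ M) * (1 + t) ^ (-2:ℝ) := by
          refine mul_le_mul_of_nonneg_right (mul_le_mul_of_nonneg_left (by linarith) hK0) h3
      _ ≤ K * (1 + (‖x₀‖ + 1) ^ M) * (1 + t ^ 2)⁻¹ :=
          mul_le_mul_of_nonneg_left h2 (mul_nonneg hK0 h4)
  · exact (integrable_inv_one_add_sq.restrict (s := Ioi 0)).const_mul _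
  · refine (ae_restrict_iff' measurableSet_Ioi).mpr (Filter.Eventually.of_forall fun t ht => ?_)
    exact (hcont t ht).continuousAt
end

section
/- For every E ∈ 𝒮 suppose P(E) ≥ c^{−1} μ(E ∩ A) and P'(E) ≥ c^{−1} μ(E ∩ A). Then ∫_S min(φ(y), 1) P'(dy) ≥ μ(A)/c. (This is the key step showing that a strong local Doeblin minorization implies the local Doeblin overlap condition with constant q = μ(A)/c.) -/
open MeasureTheory

/-- if `P(E) ≥ c⁻¹ μ(E ∩ A)` and `P'(E) ≥ c⁻¹ μ(E ∩ A)` for every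
measurable `E`, then `∫ min(φ, 1) dP' ≥ μ(A)/c`, where `φ = dP/dP'` is the density of the
absolutely continuous part in the Lebesgue decomposition of `P` with respect to `P'`. -/
theorem stmt8
    {S : Type*} [MeasurableSpace S]
    (Pm P' μ : Measure S)
    [IsProbabilityMeasure Pm] [IsProbabilityMeasure P'] [IsProbabilityMeasure μ]
    (A : Set S) (hA : MeasurableSet A) (hA0 : 0 < μ A)
    (c : ENNReal) (hc : 1 ≤ c) (hc' : c ≠ ⊤)
    (hPlow : ∀ E : Set S, MeasurableSet E → μ (E ∩ A) / c ≤ Pm E)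
    (hP'low : ∀ E : Set S, MeasurableSet E → μ (E ∩ A) / c ≤ P' E) :
    μ A / c ≤ ∫⁻ y, min (Pm.rnDeriv P' y) 1 ∂P' := by
  set φ := Pm.rnDeriv P' with hφ
  have hφm : Measurable φ := Measure.measurable_rnDeriv _ _
  obtain ⟨s, hs, hsing, hs'⟩ := Pm.mutuallySingular_singularPart P'
  set E : Set S := {y | φ y < 1} with hE
  have hEm : MeasurableSet E := measurableSet_lt hφm measurable_const
  set F : Set S := E ∩ s with hF
  have hFm : MeasurableSet F := hEm.inter hs
  -- split the integral
  have hsplit : ∫⁻ y, min (φ y) 1 ∂P'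
      = (∫⁻ y in F, min (φ y) 1 ∂P') + ∫⁻ y in Fᶜ, min (φ y) 1 ∂P' :=
    (lintegral_add_compl _ hFm).symm
  -- first piece
  have h1 : μ (F ∩ A) / c ≤ ∫⁻ y in F, min (φ y) 1 ∂P' := by
    have heq : ∫⁻ y in F, min (φ y) 1 ∂P' = ∫⁻ y in F, φ y ∂P' := by
      refine setLIntegral_congr_fun hFm ?_
      intro y hy
      exact min_eq_left (le_of_lt hy.1)
    have hPmF : Pm F = ∫⁻ y in F, φ y ∂P' := by
      have := Pm.haveLebesgueDecomposition_add P'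
      have hFeq : Pm F = (Pm.singularPart P') F + (P'.withDensity φ) F := by
        conv_lhs => rw [this]
        rfl
      have hsF : (Pm.singularPart P') F = 0 :=
        measure_mono_null (Set.inter_subset_right) hsing
      rw [hFeq, hsF, zero_add, withDensity_apply _ hFm]
    rw [heq, ← hPmF]
    exact hPlow F hFm
  -- second piece
  have h2 : μ (Fᶜ ∩ A) / c ≤ ∫⁻ y in Fᶜ, min (φ y) 1 ∂P' := by
    have hsub : ∫⁻ y in Eᶜ ∩ s, min (φ y) 1 ∂P' ≤ ∫⁻ y in Fᶜ, min (φ y) 1 ∂P' := by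
      refine lintegral_mono_set ?_
      intro y hy
      exact fun h => (hy.1 h.1).elim
    have heq : ∫⁻ y in Eᶜ ∩ s, min (φ y) 1 ∂P' = P' (Eᶜ ∩ s) := by
      have : ∫⁻ y in Eᶜ ∩ s, min (φ y) 1 ∂P' = ∫⁻ _ in Eᶜ ∩ s, 1 ∂P' := by
        refine setLIntegral_congr_fun (hEm.compl.inter hs) ?_
        intro y hy
        exact min_eq_right (not_lt.mp hy.1)
      rw [this, setLIntegral_one]
    have hPeq : P' (Eᶜ ∩ s) = P' Fᶜ := by
      have h1' : P' Fᶜ ≤ P' (Eᶜ ∩ s) + P' sᶜ := by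
        refine le_trans (measure_mono ?_) (measure_union_le _ _)
        intro y hy
        by_cases hys : y ∈ s
        · left; exact ⟨fun hE' => hy ⟨hE', hys⟩, hys⟩
        · right; exact hys
      have h2' : P' (Eᶜ ∩ s) ≤ P' Fᶜ :=
        measure_mono (fun y hy h => (hy.1 h.1).elim)
      rw [hs'] at h1'
      simpa using le_antisymm h2' (by simpa using h1')
    calc μ (Fᶜ ∩ A) / c ≤ P' Fᶜ := hP'low Fᶜ hFm.compl
      _ = P' (Eᶜ ∩ s) := hPeq.symm
      _ = ∫⁻ y in Eᶜ ∩ s, min (φ y) 1 ∂P' := heq.symm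
      _ ≤ _ := hsub
  -- combine
  have hsum : μ (F ∩ A) / c + μ (Fᶜ ∩ A) / c = μ A / c := by
    rw [ENNReal.div_add_div_same]
    congr 1
    rw [Set.inter_comm F A, Set.inter_comm Fᶜ A, ← Set.diff_eq]
    exact measure_inter_add_diff A hFm
  calc μ A / c = μ (F ∩ A) / c + μ (Fᶜ ∩ A) / c := hsum.symm
    _ ≤ (∫⁻ y in F, min (φ y) 1 ∂P') + ∫⁻ y in Fᶜ, min (φ y) 1 ∂P' := add_le_add h1 h2
    _ = _ := hsplit.symm
end

section
/- For every Borel measurable v : ℝ^d → ℝ satisfying |v(y)| ≤ C(1+|y|^{m̃}) for all y ∈ ℝ^d (for some constant C), one has ∫ v dν_n → ∫ v dμ as n → ∞. -/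
open MeasureTheory Set Filter

lemma supDiff_le_one {α : Type*} [MeasurableSpace α] (P Q : Measure α)
    [IsProbabilityMeasure P] :
    (⨆ (E : Set α) (_ : MeasurableSet E), (P E - Q E)) ≤ 1 :=
  iSup₂_le fun _ _ => tsub_le_self.trans prob_le_one

/-- One-sided layer-cake comparison: for a nonneg bounded measurable `g`,
`∫ g dP - ∫ g dQ ≤ K · sup_E (P E - Q E)`. -/
lemma integral_sub_le_tv {α : Type*} [MeasurableSpace α] (P Q : Measure α)
    [IsProbabilityMeasure P] [IsProbabilityMeasure Q]
    (g : α → ℝ) (hg : Measurable g) (K : ℝ) (hK : 0 ≤ K)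
    (hg0 : ∀ x, 0 ≤ g x) (hgK : ∀ x, g x ≤ K) :
    ∫ x, g x ∂P - ∫ x, g x ∂Q ≤
      K * (⨆ (E : Set α) (_ : MeasurableSet E), (P E - Q E)).toReal := by
  set S := ⨆ (E : Set α) (_ : MeasurableSet E), (P E - Q E) with hS
  have hS1 : S ≤ 1 := supDiff_le_one P Q
  have hSne : S ≠ ⊤ := (hS1.trans_lt ENNReal.one_lt_top).ne
  have hPint : ∫⁻ x, ENNReal.ofReal (g x) ∂P ≤ ENNReal.ofReal K := by
    calc ∫⁻ x, ENNReal.ofReal (g x) ∂P ≤ ∫⁻ _, ENNReal.ofReal K ∂P :=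
          lintegral_mono fun x => ENNReal.ofReal_le_ofReal (hgK x)
      _ = ENNReal.ofReal K := by simp
  have hQint : ∫⁻ x, ENNReal.ofReal (g x) ∂Q ≤ ENNReal.ofReal K := by
    calc ∫⁻ x, ENNReal.ofReal (g x) ∂Q ≤ ∫⁻ _, ENNReal.ofReal K ∂Q :=
          lintegral_mono fun x => ENNReal.ofReal_le_ofReal (hgK x)
      _ = ENNReal.ofReal K := by simp
  have hPne : ∫⁻ x, ENNReal.ofReal (g x) ∂P ≠ ⊤ :=
    (hPint.trans_lt ENNReal.ofReal_lt_top).ne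
  have hQne : ∫⁻ x, ENNReal.ofReal (g x) ∂Q ≠ ⊤ :=
    (hQint.trans_lt ENNReal.ofReal_lt_top).ne
  have hQmble : Measurable fun t : ℝ => Q {a : α | t < g a} := by
    apply Antitone.measurable
    intro t s hts
    exact measure_mono fun a ha => lt_of_le_of_lt hts ha
  have hsub : ∫⁻ x, ENNReal.ofReal (g x) ∂P - ∫⁻ x, ENNReal.ofReal (g x) ∂Q ≤
      ENNReal.ofReal K * S := by
    rw [lintegral_eq_lintegral_meas_lt P (ae_of_all _ hg0) hg.aemeasurable,
      lintegral_eq_lintegral_meas_lt Q (ae_of_all _ hg0) hg.aemeasurable]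
    calc (∫⁻ t in Ioi 0, P {a : α | t < g a}) - (∫⁻ t in Ioi 0, Q {a : α | t < g a})
        ≤ ∫⁻ t in Ioi 0, (P {a : α | t < g a} - Q {a : α | t < g a}) :=
          lintegral_sub_le' _ _ hQmble.aemeasurable
      _ ≤ ∫⁻ t in Ioi 0, (Ioc (0:ℝ) K).indicator (fun _ => S) t := by
          apply setLIntegral_mono (measurable_const.indicator measurableSet_Ioc)
          intro t ht
          rcases le_or_gt t K with hcase | hcase
          · rw [Set.indicator_of_mem (mem_Ioc.2 ⟨mem_Ioi.1 ht, hcase⟩)]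
            refine tsub_le_iff_right.2 ?_
            have hmeas : MeasurableSet {a : α | t < g a} :=
              measurableSet_lt measurable_const hg
            have := le_iSup₂ (f := fun (E : Set α) (_ : MeasurableSet E) => P E - Q E)
              {a : α | t < g a} hmeas
            exact tsub_le_iff_right.1 this
          · have hempty : {a : α | t < g a} = ∅ := by
              ext a; simp only [mem_setOf_eq, mem_empty_iff_false, iff_false, not_lt]
              exact (hgK a).trans hcase.le
            simp [hempty]
      _ ≤ ∫⁻ t, (Ioc (0:ℝ) K).indicator (fun _ => S) t :=
          setLIntegral_le_lintegral _ _
      _ = S * volume (Ioc (0:ℝ) K) := lintegral_indicator_const measurableSet_Ioc S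
      _ = ENNReal.ofReal K * S := by
          rw [Real.volume_Ioc, sub_zero, mul_comm]
  rw [integral_eq_lintegral_of_nonneg_ae (ae_of_all _ hg0) hg.aestronglyMeasurable,
    integral_eq_lintegral_of_nonneg_ae (ae_of_all _ hg0) hg.aestronglyMeasurable]
  have hRHSne : ENNReal.ofReal K * S ≠ ⊤ :=
    ENNReal.mul_ne_top ENNReal.ofReal_ne_top hSne
  rcases le_total (∫⁻ x, ENNReal.ofReal (g x) ∂P) (∫⁻ x, ENNReal.ofReal (g x) ∂Q) with h | h
  · have h1 : (∫⁻ x, ENNReal.ofReal (g x) ∂P).toReal ≤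
        (∫⁻ x, ENNReal.ofReal (g x) ∂Q).toReal := ENNReal.toReal_mono hQne h
    have h2 : 0 ≤ K * S.toReal := mul_nonneg hK ENNReal.toReal_nonneg
    linarith
  · rw [← ENNReal.toReal_sub_of_le h hPne]
    have := ENNReal.toReal_mono hRHSne hsub
    rwa [ENNReal.toReal_mul, ENNReal.toReal_ofReal hK] at this

/-- Two-sided bound: `|∫ f dP - ∫ f dQ| ≤ 2 B · tvNorm P Q` for `|f| ≤ B`. -/
lemma abs_integral_sub_le_tv {α : Type*} [MeasurableSpace α] (P Q : Measure α)
    [IsProbabilityMeasure P] [IsProbabilityMeasure Q]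
    (f : α → ℝ) (hf : Measurable f) (B : ℝ) (hB : 0 ≤ B) (hfB : ∀ x, |f x| ≤ B) :
    |∫ x, f x ∂P - ∫ x, f x ∂Q| ≤ 2 * B * tvNorm P Q := by
  have hfint : ∀ (R : Measure α), IsProbabilityMeasure R → Integrable f R := by
    intro R hR
    exact Integrable.mono' (integrable_const B) hf.aestronglyMeasurable
      (ae_of_all _ fun x => by simpa [Real.norm_eq_abs] using hfB x)
  set g : α → ℝ := fun x => f x + B with hgdef
  have hg : Measurable g := hf.add_const B
  have hg0 : ∀ x, 0 ≤ g x := fun x => by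
    have := (abs_le.1 (hfB x)).1; simp only [hgdef]; linarith
  have hgK : ∀ x, g x ≤ 2 * B := fun x => by
    have := (abs_le.1 (hfB x)).2; simp only [hgdef]; linarith
  have hgint : ∀ (R : Measure α), IsProbabilityMeasure R →
      MeasureTheory.integral R (fun x => g x) = MeasureTheory.integral R (fun x => f x) + B := by
    intro R hR
    rw [hgdef]
    rw [integral_add (hfint R hR) (integrable_const B), integral_const]
    simp
  have h1 := integral_sub_le_tv P Q g hg (2 * B) (by linarith) hg0 hgK
  have h2 := integral_sub_le_tv Q P g hg (2 * B) (by linarith) hg0 hgK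
  rw [hgint P ‹_›, hgint Q ‹_›] at h1 h2
  have ht1 : (0:ℝ) ≤ (⨆ (E : Set α) (_ : MeasurableSet E), (P E - Q E)).toReal :=
    ENNReal.toReal_nonneg
  have ht2 : (0:ℝ) ≤ (⨆ (E : Set α) (_ : MeasurableSet E), (Q E - P E)).toReal :=
    ENNReal.toReal_nonneg
  rw [abs_le]
  unfold tvNorm
  constructor <;> nlinarith

/-- if `ν_n` and `μ` are probability measures with uniformly bounded
`m`-th moments and `‖ν_n − μ‖ → 0`, then `∫ v dν_n → ∫ v dμ` for every Borel `v`
with `|v(y)| ≤ C (1+|y|^m̃)`, `0 ≤ m̃ < m`. -/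
theorem stmt12
    (d : ℕ) (hd : 1 ≤ d)
    (μ : Measure (EuclideanSpace ℝ (Fin d)))
    (ν : ℕ → Measure (EuclideanSpace ℝ (Fin d)))
    (hμ : IsProbabilityMeasure μ) (hν : ∀ n, IsProbabilityMeasure (ν n))
    (m mt M : ℝ) (hmt0 : 0 ≤ mt) (hmtm : mt < m)
    (hνm : ∀ n, ∫⁻ y, ENNReal.ofReal (‖y‖ ^ m) ∂(ν n) ≤ ENNReal.ofReal M)
    (hμm : ∫⁻ y, ENNReal.ofReal (‖y‖ ^ m) ∂μ ≤ ENNReal.ofReal M)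
    (htv : Tendsto (fun n => tvNorm (ν n) μ) atTop (nhds 0)) :
    ∀ (v : EuclideanSpace ℝ (Fin d) → ℝ) (C : ℝ), Measurable v →
      (∀ y, |v y| ≤ C * (1 + ‖y‖ ^ mt)) →
      Tendsto (fun n => ∫ y, v y ∂(ν n)) atTop (nhds (∫ y, v y ∂μ)) := by
  intro v C hv hvC
  have hC : 0 ≤ C := by
    have h0 := hvC 0
    have h1 : (0:ℝ) ≤ ‖(0 : EuclideanSpace ℝ (Fin d))‖ ^ mt :=
      Real.rpow_nonneg (norm_nonneg _) mt
    nlinarith [abs_nonneg (v 0)]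
  set M' : ℝ := max M 0 with hM'def
  have hM'0 : 0 ≤ M' := le_max_right _ _
  have hνm' : ∀ n, ∫⁻ y, ENNReal.ofReal (‖y‖ ^ m) ∂(ν n) ≤ ENNReal.ofReal M' :=
    fun n => (hνm n).trans (ENNReal.ofReal_le_ofReal (le_max_left _ _))
  have hμm' : ∫⁻ y, ENNReal.ofReal (‖y‖ ^ m) ∂μ ≤ ENNReal.ofReal M' :=
    hμm.trans (ENNReal.ofReal_le_ofReal (le_max_left _ _))
  have hkey : ∀ y : EuclideanSpace ℝ (Fin d), ‖y‖ ^ mt ≤ 1 + ‖y‖ ^ m := by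
    intro y
    rcases le_total ‖y‖ 1 with h | h
    · have h1 : ‖y‖ ^ mt ≤ 1 := Real.rpow_le_one (norm_nonneg y) h hmt0
      have h2 : (0:ℝ) ≤ ‖y‖ ^ m := Real.rpow_nonneg (norm_nonneg y) m
      linarith
    · have h1 : ‖y‖ ^ mt ≤ ‖y‖ ^ m := Real.rpow_le_rpow_of_exponent_le h hmtm.le
      linarith
  have hvm : ∀ y : EuclideanSpace ℝ (Fin d), |v y| ≤ C * (2 + ‖y‖ ^ m) := by
    intro y
    refine (hvC y).trans (mul_le_mul_of_nonneg_left ?_ hC)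
    have := hkey y; linarith
  -- integrability of v against measures with bounded m-th moment
  have hint : ∀ (P : Measure (EuclideanSpace ℝ (Fin d))), IsProbabilityMeasure P →
      (∫⁻ y, ENNReal.ofReal (‖y‖ ^ m) ∂P ≤ ENNReal.ofReal M') → Integrable v P := by
    intro P hP hPm
    refine ⟨hv.aestronglyMeasurable, ?_⟩
    rw [hasFiniteIntegral_iff_norm]
    calc ∫⁻ y, ENNReal.ofReal ‖v y‖ ∂P
        ≤ ∫⁻ y, ENNReal.ofReal C * (ENNReal.ofReal 2 + ENNReal.ofReal (‖y‖ ^ m)) ∂P := by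
          apply lintegral_mono
          intro y
          dsimp only
          rw [← ENNReal.ofReal_add (by norm_num) (Real.rpow_nonneg (norm_nonneg y) m),
            ← ENNReal.ofReal_mul hC]
          exact ENNReal.ofReal_le_ofReal (by rw [Real.norm_eq_abs]; exact hvm y)
      _ = ENNReal.ofReal C *
          (ENNReal.ofReal 2 + ∫⁻ y, ENNReal.ofReal (‖y‖ ^ m) ∂P) := by
          rw [lintegral_const_mul _ (by fun_prop), lintegral_add_left measurable_const,
            lintegral_const, measure_univ, mul_one]
      _ < ⊤ := by
          refine ENNReal.mul_lt_top ENNReal.ofReal_lt_top ?_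
          exact ENNReal.add_lt_top.2 ⟨ENNReal.ofReal_lt_top,
            hPm.trans_lt ENNReal.ofReal_lt_top⟩
  have hintν : ∀ n, Integrable v (ν n) := fun n => hint (ν n) (hν n) (hνm' n)
  have hintμ : Integrable v μ := hint μ hμ hμm'
  -- tail bound
  have tail : ∀ (P : Measure (EuclideanSpace ℝ (Fin d))), IsProbabilityMeasure P →
      (∫⁻ y, ENNReal.ofReal (‖y‖ ^ m) ∂P ≤ ENNReal.ofReal M') →
      ∀ R : ℝ, 1 ≤ R →
      |∫ y, ({y : EuclideanSpace ℝ (Fin d) | ‖y‖ ≤ R}ᶜ).indicator v y ∂P| ≤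
        2 * C * R ^ (mt - m) * M' := by
    intro P hP hPm R hR
    set w : EuclideanSpace ℝ (Fin d) → ℝ :=
      ({y : EuclideanSpace ℝ (Fin d) | ‖y‖ ≤ R}ᶜ).indicator v with hwdef
    have hR0 : (0:ℝ) < R := lt_of_lt_of_le one_pos hR
    have hcoef : (0:ℝ) ≤ 2 * C * R ^ (mt - m) :=
      mul_nonneg (by linarith) (Real.rpow_nonneg hR0.le _)
    have hpt : ∀ y : EuclideanSpace ℝ (Fin d), ENNReal.ofReal ‖w y‖ ≤
        ENNReal.ofReal (2 * C * R ^ (mt - m)) * ENNReal.ofReal (‖y‖ ^ m) := by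
      intro y
      by_cases hy : ‖y‖ ≤ R
      · rw [hwdef, Set.indicator_of_notMem (by simpa using hy)]
        simp
      · push_neg at hy
        rw [hwdef, Set.indicator_of_mem (by simpa using not_le.2 hy)]
        have h1 : 1 ≤ ‖y‖ := hR.trans hy.le
        have hpos : 0 < ‖y‖ := lt_of_lt_of_le one_pos h1
        have e1 : ‖y‖ ^ mt = ‖y‖ ^ (mt - m) * ‖y‖ ^ m := by
          rw [← Real.rpow_add hpos]; congr 1; ring
        have h4 : ∀ x : ℝ, 0 ≤ x → x ^ (mt - m) = (x ^ (m - mt))⁻¹ := by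
          intro x hx
          rw [← Real.rpow_neg hx]; congr 1; ring
        have e2 : ‖y‖ ^ (mt - m) ≤ R ^ (mt - m) := by
          have h3 : R ^ (m - mt) ≤ ‖y‖ ^ (m - mt) :=
            Real.rpow_le_rpow hR0.le hy.le (by linarith)
          rw [h4 _ (norm_nonneg y), h4 _ hR0.le]
          exact inv_anti₀ (Real.rpow_pos_of_pos hR0 _) h3
        have h5 : 1 ≤ ‖y‖ ^ mt := Real.one_le_rpow h1 hmt0
        have h6 : |v y| ≤ 2 * C * R ^ (mt - m) * ‖y‖ ^ m := by
          calc |v y| ≤ C * (1 + ‖y‖ ^ mt) := hvC y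
            _ ≤ C * (2 * ‖y‖ ^ mt) := mul_le_mul_of_nonneg_left (by linarith) hC
            _ = 2 * C * (‖y‖ ^ (mt - m) * ‖y‖ ^ m) := by rw [← e1]; ring
            _ ≤ 2 * C * (R ^ (mt - m) * ‖y‖ ^ m) := by
                refine mul_le_mul_of_nonneg_left ?_ (by linarith)
                exact mul_le_mul_of_nonneg_right e2 (Real.rpow_nonneg (norm_nonneg y) m)
            _ = 2 * C * R ^ (mt - m) * ‖y‖ ^ m := by ring
        rw [← ENNReal.ofReal_mul hcoef]
        exact ENNReal.ofReal_le_ofReal (by rw [Real.norm_eq_abs]; exact h6)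
    have step1 : |∫ y, w y ∂P| ≤ (∫⁻ y, ENNReal.ofReal ‖w y‖ ∂P).toReal := by
      rw [← Real.norm_eq_abs]; exact norm_integral_le_lintegral_norm _
    have step2 : ∫⁻ y, ENNReal.ofReal ‖w y‖ ∂P ≤
        ENNReal.ofReal (2 * C * R ^ (mt - m)) * ENNReal.ofReal M' := by
      calc ∫⁻ y, ENNReal.ofReal ‖w y‖ ∂P
          ≤ ∫⁻ y, ENNReal.ofReal (2 * C * R ^ (mt - m)) *
              ENNReal.ofReal (‖y‖ ^ m) ∂P := lintegral_mono hpt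
        _ = ENNReal.ofReal (2 * C * R ^ (mt - m)) *
              ∫⁻ y, ENNReal.ofReal (‖y‖ ^ m) ∂P :=
            lintegral_const_mul _ (by fun_prop)
        _ ≤ ENNReal.ofReal (2 * C * R ^ (mt - m)) * ENNReal.ofReal M' :=
            mul_le_mul_right hPm _
    have step3 : (∫⁻ y, ENNReal.ofReal ‖w y‖ ∂P).toReal ≤ 2 * C * R ^ (mt - m) * M' := by
      have := ENNReal.toReal_mono
        (ENNReal.mul_ne_top ENNReal.ofReal_ne_top ENNReal.ofReal_ne_top) step2
      rwa [ENNReal.toReal_mul, ENNReal.toReal_ofReal hcoef,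
        ENNReal.toReal_ofReal hM'0] at this
    exact step1.trans step3
  -- main argument
  rw [Metric.tendsto_atTop]
  intro ε hε
  have hexp : (0:ℝ) < m - mt := by linarith
  have htend : Tendsto (fun R : ℝ => 2 * C * M' * R ^ (-(m - mt))) atTop (nhds 0) := by
    simpa using (tendsto_rpow_neg_atTop hexp).const_mul (2 * C * M')
  have hev := htend.eventually_lt_const (show (0:ℝ) < ε / 4 by linarith)
  obtain ⟨R, hR1, hRτ⟩ := ((eventually_ge_atTop (1:ℝ)).and hev).exists
  have hR0 : (0:ℝ) < R := lt_of_lt_of_le one_pos hR1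
  have hτ : 2 * C * R ^ (mt - m) * M' < ε / 4 := by
    have he : 2 * C * R ^ (mt - m) * M' = 2 * C * M' * R ^ (-(m - mt)) := by
      rw [show mt - m = -(m - mt) by ring]; ring
    rw [he]; exact hRτ
  have hs : MeasurableSet {y : EuclideanSpace ℝ (Fin d) | ‖y‖ ≤ R} :=
    measurableSet_le (by fun_prop) measurable_const
  set B : ℝ := C * (1 + R ^ mt) with hBdef
  have hB0 : 0 ≤ B :=
    mul_nonneg hC (add_nonneg zero_le_one (Real.rpow_nonneg hR0.le mt))
  have hδpos : 0 < ε / (4 * (B + 1)) := by positivity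
  obtain ⟨N, hN⟩ := eventually_atTop.1 (htv.eventually_lt_const hδpos)
  refine ⟨N, fun n hn => ?_⟩
  rw [Real.dist_eq]
  have htvnn : 0 ≤ tvNorm (ν n) μ :=
    add_nonneg ENNReal.toReal_nonneg ENNReal.toReal_nonneg
  have hsplit : ∀ (P : Measure (EuclideanSpace ℝ (Fin d))), Integrable v P →
      ∫ y, v y ∂P = (∫ y, ({y : EuclideanSpace ℝ (Fin d) | ‖y‖ ≤ R}).indicator v y ∂P) +
        ∫ y, ({y : EuclideanSpace ℝ (Fin d) | ‖y‖ ≤ R}ᶜ).indicator v y ∂P := by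
    intro P hvP
    rw [← integral_add (hvP.indicator hs) (hvP.indicator hs.compl)]
    apply integral_congr_ae
    apply ae_of_all
    intro y
    exact (congrFun (Set.indicator_self_add_compl
      {y : EuclideanSpace ℝ (Fin d) | ‖y‖ ≤ R} v) y).symm
  have hvinB : ∀ y : EuclideanSpace ℝ (Fin d),
      |({y : EuclideanSpace ℝ (Fin d) | ‖y‖ ≤ R}).indicator v y| ≤ B := by
    intro y
    by_cases hy : y ∈ {y : EuclideanSpace ℝ (Fin d) | ‖y‖ ≤ R}
    · rw [Set.indicator_of_mem hy]
      refine (hvC y).trans (mul_le_mul_of_nonneg_left ?_ hC)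
      have : ‖y‖ ^ mt ≤ R ^ mt := Real.rpow_le_rpow (norm_nonneg y) hy hmt0
      linarith
    · rw [Set.indicator_of_notMem hy]; simpa using hB0
  have hbd := abs_integral_sub_le_tv (ν n) μ _ (hv.indicator hs) B hB0 hvinB
  have htvlt : tvNorm (ν n) μ < ε / (4 * (B + 1)) := hN n hn
  have hmain : 2 * B * tvNorm (ν n) μ < ε / 2 := by
    have h1 : 2 * B * tvNorm (ν n) μ ≤ 2 * B * (ε / (4 * (B + 1))) :=
      mul_le_mul_of_nonneg_left htvlt.le (by linarith)
    have hkey2 : 2 * B * (ε / (4 * (B + 1))) = (B / (B + 1)) * (ε / 2) := by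
      field_simp; ring
    have hlt : B / (B + 1) < 1 := (div_lt_one (by linarith)).2 (by linarith)
    have h2 : 2 * B * (ε / (4 * (B + 1))) < ε / 2 := by
      rw [hkey2]
      calc (B / (B + 1)) * (ε / 2) < 1 * (ε / 2) :=
            mul_lt_mul_of_pos_right hlt (by linarith)
        _ = ε / 2 := one_mul _
    linarith
  have htν := tail (ν n) (hν n) (hνm' n) R hR1
  have htμ := tail μ hμ hμm' R hR1
  rw [hsplit (ν n) (hintν n), hsplit μ hintμ]
  have habs : ∀ a b a' b' : ℝ, |(a + b) - (a' + b')| ≤ |a - a'| + (|b| + |b'|) := by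
    intro a b a' b'
    have h1 : (a + b) - (a' + b') = (a - a') + (b + -b') := by ring
    rw [h1]
    refine (abs_add_le _ _).trans ?_
    have := (abs_add_le b (-b')).trans_eq (by rw [abs_neg])
    linarith
  have := habs (∫ y, ({y : EuclideanSpace ℝ (Fin d) | ‖y‖ ≤ R}).indicator v y ∂(ν n))
    (∫ y, ({y : EuclideanSpace ℝ (Fin d) | ‖y‖ ≤ R}ᶜ).indicator v y ∂(ν n))
    (∫ y, ({y : EuclideanSpace ℝ (Fin d) | ‖y‖ ≤ R}).indicator v y ∂μ)
    (∫ y, ({y : EuclideanSpace ℝ (Fin d) | ‖y‖ ≤ R}ᶜ).indicator v y ∂μ)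
  linarith
end
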